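/- Let δ > 0, M₂ > 0, set h = √(2δ/M₂) and ε(δ) = √(2M₂δ), and let x ∈ ℝ. Suppose f : ℝ → ℝ is twice differentiable on [x−h, x+2h] with |f''(t)| ≤ M₂ there, and suppose f_δ : ℝ → ℝ satisfies |f_δ(t) − f(t)| ≤ δ for t ∈ {x−h, x, x+h, x+2h}. Define f_j = (f_δ(x+h) − f_δ(x−h))/(2h) and f_{j+1} = (f_δ(x+2h) − f_δ(x))/(2h). Then |f_{j+1} − f_j| ≤ 2·ε(δ). Consequently, if |f_{j+1} − f_j| > 2·ε(δ) and |f_δ − f| ≤ δ on the four grid points, then f fails to be twice differentiable with |f''| ≤ M₂ throughout [x−h, x+2h]. -/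

import Mathlib

/-- smoothness test via consecutive difference quotients.  With
`h = √(2δ/M₂)`, `ε(δ) = √(2M₂δ)`, noisy data `f_δ` on the four grid points and
`f_j = (f_δ(x+h) - f_δ(x-h))/(2h)`, `f_{j+1} = (f_δ(x+2h) - f_δ(x))/(2h)`:
if `f` is twice differentiable on `[x-h, x+2h]` with `|f''| ≤ M₂` there, then
`|f_{j+1} - f_j| ≤ 2ε(δ)`; consequently, if `|f_{j+1} - f_j| > 2ε(δ)` then `f`
fails to be twice differentiable with `|f''| ≤ M₂` throughout `[x-h, x+2h]`. -/
theorem smoothness_test_second_difference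
    (δ M₂ h ε x : ℝ) (hδ : 0 < δ) (hM₂ : 0 < M₂)
    (hh : h = Real.sqrt (2 * δ / M₂)) (hε : ε = Real.sqrt (2 * M₂ * δ))
    (f fδ : ℝ → ℝ)
    (hnoise : ∀ t ∈ ({x - h, x, x + h, x + 2 * h} : Set ℝ), |fδ t - f t| ≤ δ) :
    ((∃ f' f'' : ℝ → ℝ, ∀ t ∈ Set.Icc (x - h) (x + 2 * h),
        HasDerivAt f (f' t) t ∧ HasDerivAt f' (f'' t) t ∧ |f'' t| ≤ M₂) →
      |(fδ (x + 2 * h) - fδ x) / (2 * h) -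
        (fδ (x + h) - fδ (x - h)) / (2 * h)| ≤ 2 * ε) ∧
    (2 * ε < |(fδ (x + 2 * h) - fδ x) / (2 * h) -
        (fδ (x + h) - fδ (x - h)) / (2 * h)| →
      ¬ ∃ f' f'' : ℝ → ℝ, ∀ t ∈ Set.Icc (x - h) (x + 2 * h),
        HasDerivAt f (f' t) t ∧ HasDerivAt f' (f'' t) t ∧ |f'' t| ≤ M₂) := by
  have hq : (0:ℝ) < 2 * δ / M₂ := by positivity
  have hhpos : 0 < h := hh ▸ Real.sqrt_pos.mpr hq
  have hεpos : 0 < ε := hε ▸ Real.sqrt_pos.mpr (by positivity)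
  -- h^2 = 2δ/M₂
  have hh2 : h ^ 2 = 2 * δ / M₂ := by
    rw [hh, Real.sq_sqrt hq.le]
  -- M₂ * h = ε
  have hMh : M₂ * h = ε := by
    have h1 : (M₂ * h) ^ 2 = ε ^ 2 := by
      rw [hε, Real.sq_sqrt (by positivity : (0:ℝ) ≤ 2 * M₂ * δ)]
      field_simp [mul_pow, hh2]
      rw [hh2]; field_simp
    nlinarith [mul_pos hM₂ hhpos, hεpos]
  -- ε * h = 2δ
  have hεh : ε * h = 2 * δ := by
    have h1 : (ε * h) ^ 2 = (2 * δ) ^ 2 := by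
      rw [hε, mul_pow, Real.sq_sqrt (by positivity : (0:ℝ) ≤ 2 * M₂ * δ), hh2]
      field_simp
    nlinarith [mul_pos hεpos hhpos, hδ]
  have key : (∃ f' f'' : ℝ → ℝ, ∀ t ∈ Set.Icc (x - h) (x + 2 * h),
        HasDerivAt f (f' t) t ∧ HasDerivAt f' (f'' t) t ∧ |f'' t| ≤ M₂) →
      |(fδ (x + 2 * h) - fδ x) / (2 * h) -
        (fδ (x + h) - fδ (x - h)) / (2 * h)| ≤ 2 * ε := by
    rintro ⟨f', f'', hf⟩
    set s : Set ℝ := Set.Icc (x - h) (x + 2 * h) with hs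
    -- Lipschitz bound for f' on s
    have hlip : ∀ a ∈ s, ∀ b ∈ s, |f' b - f' a| ≤ M₂ * |b - a| := by
      intro a ha b hb
      have := Convex.norm_image_sub_le_of_norm_hasDerivWithin_le
        (f := f') (f' := f'') (C := M₂) (s := s)
        (fun t ht => ((hf t ht).2.1).hasDerivWithinAt)
        (fun t ht => by simpa using (hf t ht).2.2) (convex_Icc _ _) ha hb
      simpa using this
    -- The auxiliary function G
    set G : ℝ → ℝ := fun t => f (x + h + t) - f (x + t) with hG
    have hGd : ∀ t ∈ Set.Icc (-h) h,
        HasDerivWithinAt G (f' (x + h + t) - f' (x + t)) (Set.Icc (-h) h) t := by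
      intro t ht
      obtain ⟨ht1, ht2⟩ := ht
      have hm1 : x + h + t ∈ s := by
        constructor <;> [nlinarith; nlinarith]
      have hm2 : x + t ∈ s := by
        constructor <;> [nlinarith; nlinarith]
      have d1 : HasDerivAt (fun t => f (x + h + t)) (f' (x + h + t)) t := by
        have := ((hf _ hm1).1).comp t (((hasDerivAt_id t).const_add (x + h)))
        simpa [Function.comp_def] using this
      have d2 : HasDerivAt (fun t => f (x + t)) (f' (x + t)) t := by
        have := ((hf _ hm2).1).comp t (((hasDerivAt_id t).const_add x))
        simpa [Function.comp_def] using this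
      exact (d1.sub d2).hasDerivWithinAt
    have hGb : ∀ t ∈ Set.Icc (-h) h, ‖f' (x + h + t) - f' (x + t)‖ ≤ M₂ * h := by
      intro t ht
      obtain ⟨ht1, ht2⟩ := ht
      have hm2 : x + t ∈ s := by constructor <;> nlinarith
      have hm1 : x + h + t ∈ s := by constructor <;> nlinarith
      have := hlip _ hm2 _ hm1
      have he : |x + h + t - (x + t)| = h := by
        rw [show x + h + t - (x + t) = h by ring, abs_of_pos hhpos]
      rw [he] at this
      simpa using this
    have hGdiff : ‖G h - G (-h)‖ ≤ (M₂ * h) * ‖h - (-h)‖ :=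
      Convex.norm_image_sub_le_of_norm_hasDerivWithin_le hGd hGb (convex_Icc _ _)
        (by constructor <;> linarith) (by constructor <;> linarith)
    have hexact : |f (x + 2 * h) - f (x + h) - f x + f (x - h)| ≤ 2 * ε * h := by
      have e1 : G h - G (-h) = f (x + 2 * h) - f (x + h) - f x + f (x - h) := by
        simp only [hG]
        rw [show x + h + h = x + 2 * h by ring, show x + h + -h = x by ring,
          show x + -h = x - h by ring]
        ring
      have e2 : ‖h - (-h)‖ = 2 * h := by
        rw [show h - (-h) = 2 * h by ring, Real.norm_eq_abs, abs_of_pos (by linarith)]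
      rw [e1, e2] at hGdiff
      rw [Real.norm_eq_abs] at hGdiff
      nlinarith [hGdiff]
    -- noise bounds
    have n1 := hnoise (x - h) (by simp)
    have n2 := hnoise x (by simp)
    have n3 := hnoise (x + h) (by simp)
    have n4 := hnoise (x + 2 * h) (by simp)
    -- combine
    rw [div_sub_div_same, abs_div, abs_of_pos (by linarith : (0:ℝ) < 2 * h),
      div_le_iff₀ (by linarith : (0:ℝ) < 2 * h)]
    have h4δ : 2 * ε * h = 4 * δ := by linear_combination 2 * hεh
    rw [h4δ] at hexact
    have h8 : 2 * ε * (2 * h) = 8 * δ := by linear_combination 4 * hεh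
    rw [h8]
    have habs := abs_le.mp hexact
    have h1 := abs_le.mp n1
    have h2 := abs_le.mp n2
    have h3 := abs_le.mp n3
    have h4 := abs_le.mp n4
    rw [abs_le]
    constructor <;> linarith [habs.1, habs.2, h1.1, h1.2, h2.1, h2.2, h3.1, h3.2,
      h4.1, h4.2]
  refine ⟨key, fun hgt hex => absurd (key hex) (not_le.mpr hgt)⟩
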